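/- For each n ≥ 1, the polynomial φ_n(u) = Σ_{t ∈ U_n} u^{sym(t)} satisfies the recurrence: φ_1(u) = 1 and, for n ≥ 2, φ_n(u) = (1/2) Σ_{k=1}^{n-1} φ_k(u) φ_{n−k}(u) + (u − 1/2)·[n even]·φ_{n/2}(u²). -/

import Mathlib

open scoped Classical

/-- Plane binary trees: every node has outdegree 0 or 2. -/
inductive BT where
  | leaf : BT
  | node : BT → BT → BT

/-- Isomorphism of rooted binary trees with *unordered* children. -/
inductive Iso : BT → BT → Prop
  | leaf : Iso .leaf .leaf
  | node {a b c d} : Iso a c → Iso b d → Iso (.node a b) (.node c d)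
  | swap {a b c d} : Iso a d → Iso b c → Iso (.node a b) (.node c d)

theorem Iso.rfl : ∀ t, Iso t t
  | .leaf => .leaf
  | .node l r => .node (Iso.rfl l) (Iso.rfl r)

theorem Iso.symm' {a b : BT} (h : Iso a b) : Iso b a := by
  induction h with
  | leaf => exact .leaf
  | node h1 h2 ih1 ih2 => exact .node ih1 ih2
  | swap h1 h2 ih1 ih2 => exact .swap ih2 ih1

theorem Iso.trans' : ∀ {a b c : BT}, Iso a b → Iso b c → Iso a c := by
  intro a b c h1
  induction h1 generalizing c with
  | leaf => exact fun h2 => h2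
  | node g1 g2 ih1 ih2 =>
      intro h2
      cases h2 with
      | node k1 k2 => exact .node (ih1 k1) (ih2 k2)
      | swap k1 k2 => exact .swap (ih1 k1) (ih2 k2)
  | swap g1 g2 ih1 ih2 =>
      intro h2
      cases h2 with
      | node k1 k2 => exact .swap (ih1 k2) (ih2 k1)
      | swap k1 k2 => exact .node (ih1 k2) (ih2 k1)

instance btSetoid : Setoid BT :=
  ⟨Iso, ⟨Iso.rfl, Iso.symm', Iso.trans'⟩⟩

/-- Otter trees: isomorphism classes of unordered rooted binary trees. -/
def Otter : Type := Quotient btSetoid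

/-- Number of leaves. -/
def leavesBT : BT → ℕ
  | .leaf => 1
  | .node l r => leavesBT l + leavesBT r

/-- Number of internal (binary) nodes. -/
def internalsBT : BT → ℕ
  | .leaf => 0
  | .node l r => internalsBT l + internalsBT r + 1

/-- Number of symmetrical nodes: internal nodes whose two subtrees are isomorphic. -/
noncomputable def symBT : BT → ℕ
  | .leaf => 0
  | .node l r => symBT l + symBT r + (if Iso l r then 1 else 0)

theorem leaves_iso {a b : BT} (h : Iso a b) : leavesBT a = leavesBT b := by
  induction h with
  | leaf => rfl
  | node h1 h2 ih1 ih2 => simp [leavesBT, ih1, ih2]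
  | swap h1 h2 ih1 ih2 => simp [leavesBT, ih1, ih2]; omega

theorem internals_iso {a b : BT} (h : Iso a b) : internalsBT a = internalsBT b := by
  induction h with
  | leaf => rfl
  | node h1 h2 ih1 ih2 => simp [internalsBT, ih1, ih2]
  | swap h1 h2 ih1 ih2 => simp [internalsBT, ih1, ih2]; omega

theorem sym_iso {a b : BT} (h : Iso a b) : symBT a = symBT b := by
  induction h with
  | leaf => rfl
  | @node a b c d h1 h2 ih1 ih2 =>
      have hiff : Iso a b ↔ Iso c d :=
        ⟨fun hab => (h1.symm'.trans' hab).trans' h2,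
         fun hcd => (h1.trans' hcd).trans' h2.symm'⟩
      simp only [symBT, ih1, ih2, if_congr hiff rfl rfl]
  | @swap a b c d h1 h2 ih1 ih2 =>
      have hiff : Iso a b ↔ Iso c d :=
        ⟨fun hab => (h2.symm'.trans' hab.symm').trans' h1,
         fun hcd => (h1.trans' hcd.symm').trans' h2.symm'⟩
      simp only [symBT, ih1, ih2, if_congr hiff rfl rfl]
      omega

def Otter.leaves : Otter → ℕ := Quotient.lift leavesBT fun _ _ h => leaves_iso h
def Otter.internals : Otter → ℕ := Quotient.lift internalsBT fun _ _ h => internals_iso h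
noncomputable def Otter.sym : Otter → ℕ := Quotient.lift symBT fun _ _ h => sym_iso h

/-- The set (as a type) of Otter trees with `n` leaves. -/
def OtterN (n : ℕ) : Type := {q : Otter // q.leaves = n}

/-- Wedderburn–Etherington numbers: number of Otter trees with `n` leaves. -/
noncomputable def WE (n : ℕ) : ℕ := Nat.card (OtterN n)

/-- Binary trees with labeled leaves. -/
inductive LBT where
  | leaf : ℕ → LBT
  | node : LBT → LBT → LBT

/-- Label-preserving isomorphism with unordered children. -/
inductive LIso : LBT → LBT → Prop
  | leaf (k : ℕ) : LIso (.leaf k) (.leaf k)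
  | node {a b c d} : LIso a c → LIso b d → LIso (.node a b) (.node c d)
  | swap {a b c d} : LIso a d → LIso b c → LIso (.node a b) (.node c d)

theorem LIso.rfl : ∀ t, LIso t t
  | .leaf k => .leaf k
  | .node l r => .node (LIso.rfl l) (LIso.rfl r)

theorem LIso.symm' {a b : LBT} (h : LIso a b) : LIso b a := by
  induction h with
  | leaf k => exact .leaf k
  | node h1 h2 ih1 ih2 => exact .node ih1 ih2
  | swap h1 h2 ih1 ih2 => exact .swap ih2 ih1

theorem LIso.trans' : ∀ {a b c : LBT}, LIso a b → LIso b c → LIso a c := by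
  intro a b c h1
  induction h1 generalizing c with
  | leaf k => exact fun h2 => h2
  | node g1 g2 ih1 ih2 =>
      intro h2
      cases h2 with
      | node k1 k2 => exact .node (ih1 k1) (ih2 k2)
      | swap k1 k2 => exact .swap (ih1 k1) (ih2 k2)
  | swap g1 g2 ih1 ih2 =>
      intro h2
      cases h2 with
      | node k1 k2 => exact .swap (ih1 k2) (ih2 k1)
      | swap k1 k2 => exact .node (ih1 k2) (ih2 k1)

instance ltSetoid : Setoid LBT :=
  ⟨LIso, ⟨LIso.rfl, LIso.symm', LIso.trans'⟩⟩

/-- Labeled (phylogenetic-type) trees up to label-preserving isomorphism. -/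
def LTree : Type := Quotient ltSetoid

/-- The multiset of leaf labels. -/
def labelsLT : LBT → Multiset ℕ
  | .leaf k => {k}
  | .node l r => labelsLT l + labelsLT r

/-- The underlying unlabeled shape of a labeled tree. -/
def shapeLT : LBT → BT
  | .leaf _ => .leaf
  | .node l r => .node (shapeLT l) (shapeLT r)

theorem labels_iso {a b : LBT} (h : LIso a b) : labelsLT a = labelsLT b := by
  induction h with
  | leaf k => rfl
  | node h1 h2 ih1 ih2 => simp [labelsLT, ih1, ih2]
  | swap h1 h2 ih1 ih2 => simp [labelsLT, ih1, ih2]; exact add_comm _ _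

theorem shape_iso {a b : LBT} (h : LIso a b) : Iso (shapeLT a) (shapeLT b) := by
  induction h with
  | leaf k => exact .leaf
  | node h1 h2 ih1 ih2 => exact .node ih1 ih2
  | swap h1 h2 ih1 ih2 => exact .swap ih1 ih2

def LTree.labels : LTree → Multiset ℕ := Quotient.lift labelsLT fun _ _ h => labels_iso h

def LTree.shape : LTree → Otter :=
  Quotient.lift (fun t => (⟦shapeLT t⟧ : Otter)) fun _ _ h => Quotient.sound (shape_iso h)

/-- Phylogenetic trees of size `n`: labeled trees whose leaf labels are exactly `1, …, n`. -/
def Phylo (n : ℕ) : Type := {q : LTree // q.labels = (Finset.Icc 1 n).val}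

/-- The number of phylogenetic trees of size `n`. -/
noncomputable def phyloCount (n : ℕ) : ℕ := Nat.card (Phylo n)

/-- The double factorial `n!! = n·(n-2)·(n-4)···`. -/
def doubleFac : ℕ → ℕ
  | 0 => 1
  | 1 => 1
  | (n+2) => (n+2) * doubleFac n

/-- The probability that two independent uniformly random phylogenetic trees of
size `n` are isomorphic (have the same shape). -/
noncomputable def pIso (n : ℕ) : ℚ :=
  (Nat.card {pp : Phylo n × Phylo n // pp.1.1.shape = pp.2.1.shape} : ℚ)
    / (Nat.card (Phylo n) : ℚ) ^ 2

/-- The generating polynomial `φ_n(u) = Σ_{t ∈ U_n} u^{sym t}`. -/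
noncomputable def phi (n : ℕ) : Polynomial ℚ :=
  ∑ᶠ t : OtterN n, (Polynomial.X : Polynomial ℚ) ^ t.1.sym

/-! ### Auxiliary development for the recurrence -/

section AuxPhi

open Polynomial Finset

theorem leavesBT_pos : ∀ t : BT, 1 ≤ leavesBT t
  | .leaf => le_refl 1
  | .node l r => by
      have h := leavesBT_pos l
      simp only [leavesBT]; omega

theorem finite_leavesBT (n : ℕ) : {t : BT | leavesBT t = n}.Finite := by
  induction n using Nat.strong_induction_on with
  | _ n ih =>
    have hsub : {t : BT | leavesBT t = n} ⊆
        insert BT.leaf ((fun p : BT × BT => BT.node p.1 p.2) ''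
          ⋃ k ∈ Finset.Ico 1 n, {t : BT | leavesBT t = k} ×ˢ {t : BT | leavesBT t = n - k}) := by
      intro t ht
      cases t with
      | leaf => exact Set.mem_insert _ _
      | node l r =>
        refine Set.mem_insert_of_mem _ ⟨(l, r), ?_, rfl⟩
        have hl := leavesBT_pos l
        have hr := leavesBT_pos r
        have ht' : leavesBT l + leavesBT r = n := ht
        simp only [Set.mem_iUnion, Finset.mem_Ico, Set.mem_prod, Set.mem_setOf_eq]
        exact ⟨leavesBT l, ⟨hl, by omega⟩, rfl, by omega⟩
    refine Set.Finite.subset (Set.Finite.insert _ (Set.Finite.image _ ?_)) hsub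
    refine Set.Finite.biUnion (Finset.Ico 1 n).finite_toSet ?_
    intro k hk
    simp only [Finset.coe_Ico, Set.mem_Ico] at hk
    exact Set.Finite.prod (ih k (by omega)) (ih (n - k) (by omega))

theorem finite_otterN (n : ℕ) : {q : Otter | q.leaves = n}.Finite := by
  have h1 : {t : BT | leavesBT t = n}.Finite := finite_leavesBT n
  have hsub : {q : Otter | q.leaves = n} ⊆
      (fun t : BT => (⟦t⟧ : Otter)) '' {t : BT | leavesBT t = n} := by
    intro q hq
    obtain ⟨t, rfl⟩ := Quotient.exists_rep q
    exact ⟨t, hq, rfl⟩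
  exact (h1.image _).subset hsub

noncomputable instance instFintypeOtterN (n : ℕ) : Fintype (OtterN n) :=
  (finite_otterN n).fintype

/-- The finset of Otter trees with `n` leaves. -/
noncomputable def US (n : ℕ) : Finset Otter := (finite_otterN n).toFinset

theorem mem_US {q : Otter} {n : ℕ} : q ∈ US n ↔ q.leaves = n :=
  Set.Finite.mem_toFinset _

theorem phi_eq (n : ℕ) : phi n = ∑ t ∈ US n, (Polynomial.X : Polynomial ℚ) ^ t.sym := by
  rw [phi, finsum_eq_sum_of_fintype]
  exact (Finset.sum_subtype (US n) (fun x => mem_US) (fun q => (X : ℚ[X]) ^ q.sym)).symm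

/-- Node constructor on Otter trees. -/
def Otter.node (a b : Otter) : Otter :=
  Quotient.map₂ BT.node (fun _ _ h _ _ h' => Iso.node h h') a b

@[simp] theorem Otter.node_mk (a b : BT) :
    Otter.node ⟦a⟧ ⟦b⟧ = (⟦BT.node a b⟧ : Otter) := rfl

theorem Otter.leaves_node (a b : Otter) :
    (Otter.node a b).leaves = a.leaves + b.leaves := by
  induction a using Quotient.ind
  induction b using Quotient.ind
  rfl

theorem Otter.leaves_pos (q : Otter) : 1 ≤ q.leaves := by
  induction q using Quotient.ind
  exact leavesBT_pos _

theorem Otter.node_comm (a b : Otter) : Otter.node a b = Otter.node b a := by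
  induction a using Quotient.ind
  induction b using Quotient.ind
  exact Quotient.sound (Iso.swap (Iso.rfl _) (Iso.rfl _))

theorem Otter.sym_node (a b : Otter) :
    (Otter.node a b).sym = a.sym + b.sym + if a = b then 1 else 0 := by
  induction a using Quotient.ind with | _ a =>
  induction b using Quotient.ind with | _ b =>
  show symBT (.node a b) = _
  simp only [symBT]
  congr 1
  exact if_congr ⟨fun h => Quotient.sound h, fun h => Quotient.exact h⟩ rfl rfl

theorem Iso.node_inv {a b c d : BT} (h : Iso (.node a b) (.node c d)) :
    (Iso a c ∧ Iso b d) ∨ (Iso a d ∧ Iso b c) := by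
  cases h with
  | node h1 h2 => exact Or.inl ⟨h1, h2⟩
  | swap h1 h2 => exact Or.inr ⟨h1, h2⟩

theorem Otter.node_inj {a b c d : Otter} (h : Otter.node a b = Otter.node c d) :
    (a = c ∧ b = d) ∨ (a = d ∧ b = c) := by
  induction a using Quotient.ind
  induction b using Quotient.ind
  induction c using Quotient.ind
  induction d using Quotient.ind
  rcases Iso.node_inv (Quotient.exact h) with ⟨h1, h2⟩ | ⟨h1, h2⟩
  · exact Or.inl ⟨Quotient.sound h1, Quotient.sound h2⟩
  · exact Or.inr ⟨Quotient.sound h1, Quotient.sound h2⟩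

theorem Otter.exists_node {q : Otter} (h : 2 ≤ q.leaves) :
    ∃ a b : Otter, Otter.node a b = q := by
  induction q using Quotient.ind with | _ t =>
  cases t with
  | leaf =>
    have h1 : Otter.leaves ⟦BT.leaf⟧ = 1 := rfl
    omega
  | node l r => exact ⟨⟦l⟧, ⟦r⟧, rfl⟩

/-- Root-symmetric Otter trees. -/
def RSym (t : Otter) : Prop := ∃ a : Otter, Otter.node a a = t

/-- The finset of ordered pairs of Otter trees whose leaf counts sum to `n`. -/
noncomputable def VS (n : ℕ) : Finset (Otter × Otter) :=
  (Finset.Ico 1 n).biUnion (fun k => US k ×ˢ US (n - k))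

theorem mem_VS {n : ℕ} {p : Otter × Otter} :
    p ∈ VS n ↔ p.1.leaves + p.2.leaves = n := by
  simp only [VS, Finset.mem_biUnion, Finset.mem_Ico, Finset.mem_product, mem_US]
  constructor
  · rintro ⟨k, ⟨hk1, hk2⟩, h1, h2⟩; omega
  · intro h
    have h1 := Otter.leaves_pos p.1
    have h2 := Otter.leaves_pos p.2
    exact ⟨p.1.leaves, ⟨h1, by omega⟩, rfl, by omega⟩

theorem sum_VS (n : ℕ) :
    ∑ k ∈ Finset.Ico 1 n, phi k * phi (n - k)
      = ∑ p ∈ VS n, (X : ℚ[X]) ^ (p.1.sym + p.2.sym) := by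
  rw [VS, Finset.sum_biUnion]
  · refine Finset.sum_congr rfl fun k _ => ?_
    rw [phi_eq, phi_eq, Finset.sum_mul_sum, Finset.sum_product]
    simp only [← pow_add]
  · intro k hk k' hk' hne
    simp only [Finset.disjoint_left, Finset.mem_product, mem_US]
    rintro p ⟨h1, -⟩ ⟨h1', -⟩
    exact hne (h1 ▸ h1')

theorem fiber_eq {n : ℕ} (a b : Otter) (hab : a.leaves + b.leaves = n) :
    {p ∈ VS n | Otter.node p.1 p.2 = Otter.node a b} = ({(a, b), (b, a)} : Finset (Otter × Otter)) := by
  ext p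
  simp only [Finset.mem_filter, Finset.mem_insert, Finset.mem_singleton, mem_VS]
  constructor
  · rintro ⟨hle, heq⟩
    rcases Otter.node_inj heq with ⟨h1, h2⟩ | ⟨h1, h2⟩
    · exact Or.inl (Prod.ext h1 h2)
    · exact Or.inr (Prod.ext h1 h2)
  · rintro (rfl | rfl)
    · exact ⟨hab, rfl⟩
    · refine ⟨?_, Otter.node_comm _ _⟩
      show b.leaves + a.leaves = n
      omega

theorem not_RSym_of_ne {a b : Otter} (hne : a ≠ b) : ¬ RSym (Otter.node a b) := by
  rintro ⟨c, hc⟩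
  rcases Otter.node_inj hc with ⟨h1, h2⟩ | ⟨h1, h2⟩
  · exact hne (h1.symm.trans h2)
  · exact hne (h2.symm.trans h1)

theorem key_fiber {n : ℕ} (hn : 2 ≤ n) (t : Otter) (ht : t ∈ US n) :
    (X : ℚ[X]) ^ t.sym
      = C (1 / 2 : ℚ) * (∑ p ∈ VS n with Otter.node p.1 p.2 = t, (X : ℚ[X]) ^ (p.1.sym + p.2.sym))
        + (if RSym t then ((X : ℚ[X]) - C (1 / 2 : ℚ)) * X ^ (t.sym - 1) else 0) := by
  rw [mem_US] at ht
  obtain ⟨a, b, rfl⟩ := Otter.exists_node (le_of_le_of_eq hn ht.symm)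
  rw [Otter.leaves_node] at ht
  rw [fiber_eq a b ht]
  by_cases hab : a = b
  · subst hab
    have hset : ({(a, a), (a, a)} : Finset (Otter × Otter)) = {(a, a)} :=
      Finset.insert_eq_self.mpr (Finset.mem_singleton_self _)
    rw [hset, Finset.sum_singleton, if_pos ⟨a, rfl⟩]
    have hs : (Otter.node a a).sym = a.sym + a.sym + 1 := by
      rw [Otter.sym_node, if_pos rfl]
    rw [hs]
    simp only [Nat.add_sub_cancel]
    rw [pow_succ]
    ring
  · have hne : ((a, b) : Otter × Otter) ≠ (b, a) := by
      simp only [ne_eq, Prod.mk.injEq, not_and]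
      intro h; exact absurd h hab
    rw [Finset.sum_pair hne, if_neg (not_RSym_of_ne hab), add_zero]
    have hs : (Otter.node a b).sym = a.sym + b.sym := by
      rw [Otter.sym_node, if_neg hab, add_zero]
    rw [hs, Nat.add_comm b.sym a.sym, mul_add, ← add_mul, ← Polynomial.C_add]
    norm_num

theorem sum_corr {n : ℕ} (hn : 2 ≤ n) :
    (∑ t ∈ US n, if RSym t then ((X : ℚ[X]) - C (1 / 2 : ℚ)) * X ^ (t.sym - 1) else 0)
      = if Even n then ((X : ℚ[X]) - C (1 / 2 : ℚ)) * (phi (n / 2)).comp (X ^ 2) else 0 := by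
  by_cases hev : Even n
  · rw [if_pos hev]
    obtain ⟨r, hr⟩ := hev
    rw [phi_eq, Polynomial.sum_comp, Finset.mul_sum, ← Finset.sum_filter]
    symm
    refine Finset.sum_bij (fun a _ => Otter.node a a) ?_ ?_ ?_ ?_
    · intro a ha
      rw [mem_US] at ha
      refine Finset.mem_filter.mpr ⟨mem_US.mpr ?_, a, rfl⟩
      rw [Otter.leaves_node, ha]; omega
    · intro a ha a' ha' h
      rcases Otter.node_inj h with ⟨h1, -⟩ | ⟨h1, -⟩ <;> exact h1
    · intro t ht
      obtain ⟨htU, a, rfl⟩ := Finset.mem_filter.mp ht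
      rw [mem_US, Otter.leaves_node] at htU
      exact ⟨a, mem_US.mpr (by omega), rfl⟩
    · intro a ha
      have hs : (Otter.node a a).sym = a.sym + a.sym + 1 := by
        rw [Otter.sym_node, if_pos rfl]
      rw [hs]
      simp only [Nat.add_sub_cancel, Polynomial.pow_comp, Polynomial.X_comp]
      rw [← pow_mul, two_mul]
  · rw [if_neg hev]
    refine Finset.sum_eq_zero fun t ht => ?_
    rw [if_neg]
    rintro ⟨a, rfl⟩
    rw [mem_US, Otter.leaves_node] at ht
    exact hev ⟨a.leaves, ht.symm⟩

end AuxPhi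

/-- `φ_1(u) = 1` and, for `n ≥ 2`,
`φ_n(u) = (1/2) Σ_{k=1}^{n-1} φ_k(u) φ_{n−k}(u) + (u − 1/2)[n even] φ_{n/2}(u²)`. -/
theorem phi_recurrence :
    phi 1 = 1 ∧
    ∀ n : ℕ, 2 ≤ n →
      phi n = Polynomial.C (1 / 2 : ℚ) * ∑ k ∈ Finset.Ico 1 n, phi k * phi (n - k)
        + (if Even n then
            (Polynomial.X - Polynomial.C (1 / 2 : ℚ)) * (phi (n / 2)).comp (Polynomial.X ^ 2)
          else 0) := by
  constructor
  · rw [phi_eq]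
    have hU : US 1 = {(id ⟦BT.leaf⟧ : Otter)} := by
      ext q
      rw [mem_US, Finset.mem_singleton]
      constructor
      · intro hq
        induction q using Quotient.ind with | _ t =>
        cases t with
        | leaf => rfl
        | node l r =>
          have h1 := leavesBT_pos l
          have h2 := leavesBT_pos r
          have : Otter.leaves ⟦BT.node l r⟧ = leavesBT l + leavesBT r := rfl
          omega
      · rintro rfl; rfl
    rw [hU, Finset.sum_singleton]
    have : Otter.sym (id ⟦BT.leaf⟧ : Otter) = 0 := rfl
    rw [this, pow_zero]
  · intro n hn
    rw [sum_VS n, ← Finset.sum_fiberwise_of_maps_to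
      (g := fun p : Otter × Otter => Otter.node p.1 p.2) (t := US n)
      (fun p hp => mem_US.mpr (by rw [Otter.leaves_node]; exact mem_VS.mp hp)),
      Finset.mul_sum, ← sum_corr hn, ← Finset.sum_add_distrib, phi_eq]
    exact Finset.sum_congr rfl fun t ht => key_fiber hn t ht
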